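/- Let E be a crossed module extension of G with M, (Z²,Z¹) a lifting system, and c² ∈ C²_cpt(G,M). Define Z̃²(h,g) := ι(c²(h,g)) Z²(h,g). Then the 3-cocycle of E with respect to (Z̃²,Z¹) equals c²∂ + z³, where z³ is the 3-cocycle of E with respect to (Z²,Z¹) and ∂ is the group cohomology differential. In particular, the two 3-cocycles are cohomologous. -/
import Mathlib


/-- Let `E` be a crossed module extension `M →ι T →μ Γ →π G` with lifting system
`(Z², Z¹)`, let `c² ∈ C²_cpt(G,M)` and set `Z̃²(h,g) = ι(c²(h,g)) Z²(h,g)`. Then the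
3-cocycle of `E` with respect to `(Z̃², Z¹)` equals `c²∂ + z³`, where `z³` is the
3-cocycle of `E` with respect to `(Z², Z¹)`; in particular the two are cohomologous. -/
theorem three_cocycle_of_modified_lifting_system
    {G M T Γ : Type*} [Group G] [AddCommGroup M] [DistribMulAction G M]
    [Group T] [Group Γ]
    -- the crossed module extension E : M → T → Γ → G with action `act` of Γ on T
    (act : Γ → T → T)
    (hact1 : ∀ g t s, act g (t * s) = act g t * act g s)
    (hact2 : ∀ t, act 1 t = t)
    (hact3 : ∀ g h t, act (g * h) t = act g (act h t))
    (ι : M → T) (μ : T →* Γ) (π : Γ →* G)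
    (hι : Function.Injective ι)
    (hιadd : ∀ a b, ι (a + b) = ι a * ι b)
    (hequi : ∀ g t, μ (act g t) = g * μ t * g⁻¹)
    (hpeif : ∀ t s, act (μ s) t = s * t * s⁻¹)
    (hexact₁ : ∀ t : T, μ t = 1 ↔ ∃ m, ι m = t)
    (hexact₂ : ∀ g : Γ, π g = 1 ↔ ∃ t, μ t = g)
    (hπ : Function.Surjective π)
    (hcompat : ∀ (e : Γ) (m : M), act e (ι m) = ι (π e • m))
    -- a lifting system (Z², Z¹) for E
    (Z1 : G → Γ) (hZ1 : ∀ g, π (Z1 g) = g) (hZ1pt : Z1 1 = 1)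
    (Z2 : G → G → T)
    (hZ2 : ∀ h g, μ (Z2 h g) = Z1 h * Z1 g * (Z1 (h * g))⁻¹)
    (hZ2pt : ∀ g, Z2 1 g = 1 ∧ Z2 g 1 = 1)
    (c2 : G → G → M) (hc2 : ∀ g, c2 1 g = 0 ∧ c2 g 1 = 0)
    (Z2' : G → G → T) (hZ2' : ∀ h g, Z2' h g = ι (c2 h g) * Z2 h g)
    (z3 z3' : G → G → G → M)
    (hz3 : ∀ k h g,
      ι (z3 k h g) =
        Z2 k h * Z2 (k * h) g * (Z2 k (h * g))⁻¹ * (act (Z1 k) (Z2 h g))⁻¹)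
    (hz3' : ∀ k h g,
      ι (z3' k h g) =
        Z2' k h * Z2' (k * h) g * (Z2' k (h * g))⁻¹ * (act (Z1 k) (Z2' h g))⁻¹) :
    ∀ k h g,
      z3' k h g = (c2 k h + c2 (k * h) g - c2 k (h * g) - k • c2 h g) + z3 k h g := by
  -- ι is an additive homomorphism
  have hι0 : ι 0 = 1 := by
    have h := hιadd 0 0
    rw [add_zero] at h
    exact left_eq_mul.mp h
  have hιneg : ∀ a, ι (-a) = (ι a)⁻¹ := by
    intro a
    have h := hιadd (-a) a
    rw [neg_add_cancel, hι0] at h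
    exact eq_inv_of_mul_eq_one_left h.symm
  -- the image of ι is central in T
  have hcentral : ∀ (m : M) (t : T), ι m * t = t * ι m := by
    intro m t
    have h1 : π (μ t) = 1 := (hexact₂ (μ t)).2 ⟨t, rfl⟩
    have h := hpeif (ι m) t
    rw [hcompat, h1, one_smul] at h
    exact eq_mul_inv_iff_mul_eq.mp h
  have e1 : ∀ (x : M) (t u : T), t * (ι x * u) = ι x * (t * u) := by
    intro x t u; rw [← mul_assoc, ← hcentral, mul_assoc]
  have e2 : ∀ (x : M) (t : T), t * ι x = ι x * t := fun x t => (hcentral x t).symm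
  intro k h g
  apply hι
  simp only [sub_eq_add_neg, hιadd, hιneg]
  rw [hz3, hz3', hZ2' k h, hZ2' (k*h) g, hZ2' k (h*g), hZ2' h g,
    hact1, hcompat, hZ1]
  simp only [mul_inv_rev, ← hιneg]
  simp only [mul_assoc]
  conv_lhs => rw [e2, e1, e1, e1, e1, e1, e1, e1,
    e1 (-c2 k (h*g)) (Z2 k (h*g))⁻¹, e1 (-c2 k (h*g)) (Z2 (k*h) g),
    e1 (-c2 k (h*g)) (Z2 k h),
    e1 (-(k • c2 h g)) (Z2 k (h*g))⁻¹, e1 (-(k • c2 h g)) (Z2 (k*h) g),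
    e1 (-(k • c2 h g)) (Z2 k h)]
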